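/- (Quadrangle inequality for single paths on two lines.) Let f₁, f₂ be cadlag with nonnegative jumps and define L(x,y) = f₁(y) - f₂(x⁻) + sup_{z∈[x,y]}(f₂(z)-f₁(z⁻)) for x ≤ y. Then for x ≤ x' and y ≤ y' with x' ≤ y, we have L(x,y') + L(x',y) ≤ L(x,y) + L(x',y'). -/

import Mathlib

open Filter Set Topology

/-- Left limit with the convention `f(0⁻) = 0`. -/
noncomputable def lml (f : ℝ → ℝ) (z : ℝ) : ℝ := if z ≤ 0 then 0 else Function.leftLim f z

/-- Cadlag on `[0, ∞)`: right-continuous at every `x ≥ 0`, left limits exist at every `x > 0`. -/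
def Cadlag (f : ℝ → ℝ) : Prop :=
  (∀ x : ℝ, 0 ≤ x → ContinuousWithinAt f (Set.Ici x) x) ∧
  (∀ x : ℝ, 0 < x → ∃ l : ℝ, Filter.Tendsto f (nhdsWithin x (Set.Iio x)) (nhds l))

/-- All jumps are nonnegative (with the convention `f(0⁻) = 0`). -/
def NonnegJumps (f : ℝ → ℝ) : Prop := ∀ z : ℝ, 0 ≤ z → lml f z ≤ f z

/-- `S f₁ f₂ x y = sup_{z ∈ [x,y]} (f₂ z - f₁ (z⁻))`. -/
noncomputable def S (f₁ f₂ : ℝ → ℝ) (x y : ℝ) : ℝ :=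
  sSup ((fun z => f₂ z - lml f₁ z) '' Set.Icc x y)

/-- `Sm f₁ f₂ x y = sup_{z ∈ [x,y)} (f₂ z - f₁ (z⁻))`. -/
noncomputable def Sm (f₁ f₂ : ℝ → ℝ) (x y : ℝ) : ℝ :=
  sSup ((fun z => f₂ z - lml f₁ z) '' Set.Ico x y)

/-- Two-line last passage value from `(x,2)` to `(y,1)`. -/
noncomputable def Lval (f₁ f₂ : ℝ → ℝ) (x y : ℝ) : ℝ := f₁ y - lml f₂ x + S f₁ f₂ x y

/-- A cadlag function is bounded on compact subintervals of `[0,∞)`. -/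
lemma cadlag_bdd (f : ℝ → ℝ) (hf : Cadlag f) (a b : ℝ) (ha : 0 ≤ a) :
    ∃ M : ℝ, ∀ z ∈ Set.Icc a b, |f z| ≤ M := by
  obtain ⟨hr, hl⟩ := hf
  by_cases hab : a ≤ b
  · have key : ∀ t ∈ Set.Icc a b, ∃ U ∈ 𝓝 t, ∃ M : ℝ,
        ∀ z ∈ U ∩ Set.Icc a b, |f z| ≤ M := by
      intro t ht
      have ht0 : (0:ℝ) ≤ t := le_trans ha ht.1
      have h1 : Filter.Tendsto f (nhdsWithin t (Set.Ici t)) (nhds (f t)) := hr t ht0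
      have ev1 : ∀ᶠ z in nhdsWithin t (Set.Ici t), |f z - f t| < 1 := by
        have := h1 (Metric.ball_mem_nhds (f t) one_pos)
        filter_upwards [this] with z hz
        simpa [Real.dist_eq] using hz
      have ev1' : ∀ᶠ z in 𝓝 t, z ∈ Set.Ici t → |f z - f t| < 1 :=
        eventually_nhdsWithin_iff.mp ev1
      rcases eq_or_lt_of_le ht0 with h0 | h0
      · -- t = 0
        refine ⟨{z | z ∈ Set.Ici t → |f z - f t| < 1}, ev1', |f t| + 1, ?_⟩
        intro z hz
        have hzt : z ∈ Set.Ici t := by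
          have : (0:ℝ) ≤ z := le_trans ha hz.2.1
          simpa [← h0] using this
        have := hz.1 hzt
        have h2 := abs_sub_abs_le_abs_sub (f z) (f t)
        linarith
      · obtain ⟨l, hl'⟩ := hl t h0
        have ev2 : ∀ᶠ z in nhdsWithin t (Set.Iio t), |f z - l| < 1 := by
          have := hl' (Metric.ball_mem_nhds l one_pos)
          filter_upwards [this] with z hz
          simpa [Real.dist_eq] using hz
        have ev2' : ∀ᶠ z in 𝓝 t, z ∈ Set.Iio t → |f z - l| < 1 :=
          eventually_nhdsWithin_iff.mp ev2
        refine ⟨_, ev1'.and ev2', max (|f t| + 1) (|l| + 1), ?_⟩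
        intro z hz
        rcases lt_or_ge z t with hzt | hzt
        · have := hz.1.2 hzt
          have h2 := abs_sub_abs_le_abs_sub (f z) l
          have : |f z| ≤ |l| + 1 := by linarith
          exact this.trans (le_max_right _ _)
        · have := hz.1.1 hzt
          have h2 := abs_sub_abs_le_abs_sub (f z) (f t)
          have : |f z| ≤ |f t| + 1 := by linarith
          exact this.trans (le_max_left _ _)
    choose! U hU M hM using key
    obtain ⟨s, hs1, hs2⟩ := (isCompact_Icc (a := a) (b := b)).elim_nhds_subcover U
      (fun t ht => hU t ht)
    have hane : a ∈ Set.Icc a b := ⟨le_refl a, hab⟩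
    have hsne : s.Nonempty := by
      rcases Set.mem_iUnion₂.mp (hs2 hane) with ⟨t, ht, _⟩
      exact ⟨t, ht⟩
    refine ⟨s.sup' hsne M, ?_⟩
    intro z hz
    rcases Set.mem_iUnion₂.mp (hs2 hz) with ⟨t, hts, hzU⟩
    exact le_trans (hM t (hs1 t hts) z ⟨hzU, hz⟩) (Finset.le_sup' M hts)
  · exact ⟨0, fun z hz => absurd (hz.1.trans hz.2) hab⟩

/-- `lml f` is bounded on compact subintervals of `[0,∞)` by a bound for `f`. -/
lemma lml_bdd (f : ℝ → ℝ) (hf : Cadlag f) (a b M : ℝ) (ha : 0 ≤ a)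
    (hM : ∀ z ∈ Set.Icc 0 b, |f z| ≤ M) :
    ∀ z ∈ Set.Icc a b, |lml f z| ≤ max M 0 := by
  intro z hz
  have hz0 : (0:ℝ) ≤ z := le_trans ha hz.1
  rcases eq_or_lt_of_le hz0 with h0 | h0
  · simp [lml, ← h0]
  · obtain ⟨l, hl⟩ := hf.2 z h0
    have hne : nhdsWithin z (Set.Iio z) ≠ ⊥ := by
      exact (nhdsLT_neBot z).ne'
    have hlml : lml f z = l := by
      rw [lml, if_neg (not_le.mpr h0)]
      exact leftLim_eq_of_tendsto hl
    rw [hlml]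
    have hev : ∀ᶠ w in nhdsWithin z (Set.Iio z), |f w| ≤ M := by
      have h1 : ∀ᶠ w in nhdsWithin z (Set.Iio z), w ∈ Set.Iio z :=
        eventually_mem_nhdsWithin
      have h2 : ∀ᶠ w in nhdsWithin z (Set.Iio z), (0:ℝ) < w :=
        mem_nhdsWithin_of_mem_nhds (Ioi_mem_nhds h0)
      filter_upwards [h1, h2] with w hw1 hw2
      exact hM w ⟨hw2.le, le_trans hw1.le hz.2⟩
    have : |l| ≤ M := by
      haveI : (nhdsWithin z (Set.Iio z)).NeBot := nhdsLT_neBot z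
      exact le_of_tendsto hl.abs hev
    exact this.trans (le_max_left _ _)

theorem stmt10 (f₁ f₂ : ℝ → ℝ) (h₁ : Cadlag f₁) (h₂ : Cadlag f₂)
    (hj₁ : NonnegJumps f₁) (hj₂ : NonnegJumps f₂)
    (x x' y y' : ℝ) (hx : 0 ≤ x) (hxx' : x ≤ x') (hx'y : x' ≤ y) (hyy' : y ≤ y') :
    Lval f₁ f₂ x y' + Lval f₁ f₂ x' y ≤ Lval f₁ f₂ x y + Lval f₁ f₂ x' y' := by
  set g : ℝ → ℝ := fun z => f₂ z - lml f₁ z with hg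
  -- boundedness of g on [x, y']
  obtain ⟨M₁, hM₁⟩ := cadlag_bdd f₁ h₁ 0 y' le_rfl
  obtain ⟨M₂, hM₂⟩ := cadlag_bdd f₂ h₂ x y' hx
  have hgb : ∀ z ∈ Set.Icc x y', g z ≤ M₂ + max M₁ 0 := by
    intro z hz
    have h1 := hM₂ z hz
    have h2 := lml_bdd f₁ h₁ x y' M₁ hx hM₁ z hz
    have := abs_le.mp h1
    have := abs_le.mp h2
    simp only [hg]
    linarith [(abs_le.mp h1).2, (abs_le.mp h2).1]
  have hbdd : BddAbove (g '' Set.Icc x y') := ⟨M₂ + max M₁ 0, by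
    rintro _ ⟨z, hz, rfl⟩; exact hgb z hz⟩
  have hxy : x ≤ y := hxx'.trans hx'y
  have hxy' : x ≤ y' := hxy.trans hyy'
  have hx'y' : x' ≤ y' := hx'y.trans hyy'
  have hAsub : Set.Icc x y ⊆ Set.Icc x y' := Set.Icc_subset_Icc le_rfl hyy'
  have hBsub : Set.Icc x' y' ⊆ Set.Icc x y' := Set.Icc_subset_Icc hxx' le_rfl
  have hCA : Set.Icc x' y ⊆ Set.Icc x y := Set.Icc_subset_Icc hxx' le_rfl
  have hCB : Set.Icc x' y ⊆ Set.Icc x' y' := Set.Icc_subset_Icc le_rfl hyy'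
  have hbA : BddAbove (g '' Set.Icc x y) := hbdd.mono (Set.image_mono (f := g) hAsub)
  have hbB : BddAbove (g '' Set.Icc x' y') := hbdd.mono (Set.image_mono (f := g) hBsub)
  have hneA : (g '' Set.Icc x y).Nonempty := ⟨g x, ⟨x, ⟨le_rfl, hxy⟩, rfl⟩⟩
  have hneB : (g '' Set.Icc x' y').Nonempty := ⟨g x', ⟨x', ⟨le_rfl, hx'y'⟩, rfl⟩⟩
  have hneC : (g '' Set.Icc x' y).Nonempty := ⟨g x', ⟨x', ⟨le_rfl, hx'y⟩, rfl⟩⟩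
  have hunion : Set.Icc x y' = Set.Icc x y ∪ Set.Icc x' y' := by
    ext z
    simp only [Set.mem_union, Set.mem_Icc]
    constructor
    · rintro ⟨h1, h2⟩
      rcases le_total z y with h | h
      · exact Or.inl ⟨h1, h⟩
      · exact Or.inr ⟨hx'y.trans h, h2⟩
    · rintro (⟨h1, h2⟩ | ⟨h1, h2⟩)
      · exact ⟨h1, h2.trans hyy'⟩
      · exact ⟨hxx'.trans h1, h2⟩
  have hSmax : S f₁ f₂ x y' = max (S f₁ f₂ x y) (S f₁ f₂ x' y') := by
    rw [S, hunion, Set.image_union]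
    exact csSup_union hbA hneA hbB hneB
  have hSCA : S f₁ f₂ x' y ≤ S f₁ f₂ x y :=
    csSup_le_csSup hbA hneC (Set.image_mono (f := g) hCA)
  have hSCB : S f₁ f₂ x' y ≤ S f₁ f₂ x' y' :=
    csSup_le_csSup hbB hneC (Set.image_mono (f := g) hCB)
  have key : S f₁ f₂ x y' + S f₁ f₂ x' y ≤ S f₁ f₂ x y + S f₁ f₂ x' y' := by
    rw [hSmax]
    rcases le_total (S f₁ f₂ x y) (S f₁ f₂ x' y') with h | h
    · rw [max_eq_right h]; linarith
    · rw [max_eq_left h]; linarith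
  simp only [Lval]
  linarith
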